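/- Suppose r(v) = r̄ for all v ∈ {1,…,V}, where r̄ > 0. Fix b ∈ {1,…,B}. If h(b) + min_{s ∈ S} (c(s) − s·r̄) ≥ 0, then the map v ↦ μ(b,v) is non-decreasing on {1,…,V}. -/
import Mathlib


/-- `delta S hS c h r b v` is δ(b,v): δ(b,0) = 0 and
δ(b,v) = h(b) + min_{s ∈ S} (c(s) − s·(r(v) + Σ_{i=0}^{v−1} δ(b,i))). -/
noncomputable def delta (S : Finset ℝ) (hS : S.Nonempty) (c : ℝ → ℝ) (h r : ℕ → ℝ)
    (b : ℕ) : ℕ → ℝ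
  | 0 => 0
  | v + 1 => h b + S.inf' hS (fun s =>
      c s - s * (r (v + 1) + ∑ i ∈ (Finset.range (v + 1)).attach, delta S hS c h r b i.1))
decreasing_by exact Finset.mem_range.mp i.2

/-- `sigma S hS c h r b v` is σ(b,v) = Σ_{i=0}^{v} δ(b,i). -/
noncomputable def sigma (S : Finset ℝ) (hS : S.Nonempty) (c : ℝ → ℝ) (h r : ℕ → ℝ)
    (b v : ℕ) : ℝ :=
  ∑ i ∈ Finset.range (v + 1), delta S hS c h r b i

open Classical

/-- `gmin S hS c x` = the least element of the set of minimizers over s ∈ S of c(s) − s·x. -/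
noncomputable def gmin (S : Finset ℝ) (hS : S.Nonempty) (c : ℝ → ℝ) (x : ℝ) : ℝ :=
  (S.filter (fun s => ∀ s' ∈ S, c s - s * x ≤ c s' - s' * x)).min'
    (by
      obtain ⟨s, hs, hmin⟩ := S.exists_min_image (fun s => c s - s * x) hS
      exact ⟨s, Finset.mem_filter.mpr ⟨hs, fun s' hs' => hmin s' hs'⟩⟩)

/-- μ(b,v) = g(r(v) + σ(b,v−1)). -/
noncomputable def mu (S : Finset ℝ) (hS : S.Nonempty) (c : ℝ → ℝ) (h r : ℕ → ℝ)
    (b v : ℕ) : ℝ :=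
  gmin S hS c (r v + sigma S hS c h r b (v - 1))

lemma delta_succ (S : Finset ℝ) (hS : S.Nonempty) (c : ℝ → ℝ) (h r : ℕ → ℝ)
    (b v : ℕ) :
    delta S hS c h r b (v + 1)
      = h b + S.inf' hS (fun s => c s - s * (r (v + 1) + sigma S hS c h r b v)) := by
  rw [delta]
  simp [sigma, Finset.sum_attach]

lemma gmin_mono (S : Finset ℝ) (hS : S.Nonempty) (c : ℝ → ℝ) {x y : ℝ}
    (hS01 : ∀ s ∈ S, s ∈ Set.Icc (0 : ℝ) 1) (hxy : x ≤ y) :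
    gmin S hS c x ≤ gmin S hS c y := by
  rcases eq_or_lt_of_le hxy with rfl | hlt
  · exact le_rfl
  · have h1 := Finset.min'_mem (S.filter (fun s => ∀ s' ∈ S, c s - s * x ≤ c s' - s' * x))
      (by
        obtain ⟨s, hs, hmin⟩ := S.exists_min_image (fun s => c s - s * x) hS
        exact ⟨s, Finset.mem_filter.mpr ⟨hs, fun s' hs' => hmin s' hs'⟩⟩)
    have h2 := Finset.min'_mem (S.filter (fun s => ∀ s' ∈ S, c s - s * y ≤ c s' - s' * y))
      (by
        obtain ⟨s, hs, hmin⟩ := S.exists_min_image (fun s => c s - s * y) hS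
        exact ⟨s, Finset.mem_filter.mpr ⟨hs, fun s' hs' => hmin s' hs'⟩⟩)
    rw [Finset.mem_filter] at h1 h2
    set s1 := gmin S hS c x with hs1
    set s2 := gmin S hS c y with hs2
    by_contra hcon
    push_neg at hcon
    have e1 : c s1 - s1 * x ≤ c s2 - s2 * x := h1.2 s2 h2.1
    have e2 : c s2 - s2 * y ≤ c s1 - s1 * y := h2.2 s1 h1.1
    nlinarith [mul_pos (sub_pos.mpr hcon) (sub_pos.mpr hlt)]

/-- Constant reward r(v) = r̄ on {1,…,V}. If h(b) + min_{s∈S}(c(s) − s·r̄) ≥ 0,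
then v ↦ μ(b,v) is non-decreasing on {1,…,V}. -/
theorem stmt14
    (S : Finset ℝ) (hS : S.Nonempty) (hS01 : ∀ s ∈ S, s ∈ Set.Icc (0 : ℝ) 1)
    (c : ℝ → ℝ) (hc0 : ∀ s ∈ S, 0 ≤ c s)
    (hcmono : ∀ s ∈ S, ∀ s' ∈ S, s ≤ s' → c s ≤ c s')
    (h : ℕ → ℝ) (hh0 : ∀ b, 0 ≤ h b) (hhmono : Monotone h)
    (r : ℕ → ℝ) (hrmono : Monotone r) (hr0 : r 0 = 0) (hrpos : ∀ v, 1 ≤ v → 0 < r v)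
    (B V : ℕ) (hB : 0 < B) (hV : 0 < V)
    (rbar : ℝ) (hrbar : 0 < rbar) (hrconst : ∀ v, 1 ≤ v → v ≤ V → r v = rbar)
    (b : ℕ) (hb1 : 1 ≤ b) (hbB : b ≤ B)
    (hpos : 0 ≤ h b + S.inf' hS (fun s => c s - s * rbar)) :
    ∀ v v', 1 ≤ v → v ≤ v' → v' ≤ V →
      mu S hS c h r b v ≤ mu S hS c h r b v' := by
  set D := delta S hS c h r b with hD
  set f : ℝ → ℝ := fun x => h b + S.inf' hS (fun s => c s - s * x) with hf
  have hflip : ∀ x y : ℝ, x ≤ y → f x - (y - x) ≤ f y := by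
    intro x y hxy
    have : S.inf' hS (fun s => c s - s * x) - (y - x) ≤ S.inf' hS (fun s => c s - s * y) := by
      apply Finset.le_inf'
      intro s hs
      have h1 : S.inf' hS (fun s => c s - s * x) ≤ c s - s * x := Finset.inf'_le _ hs
      have h2 := (hS01 s hs).1
      have h3 := (hS01 s hs).2
      nlinarith
    simp only [hf]
    linarith
  have hD0 : D 0 = 0 := by rw [hD, delta]
  have hsig : ∀ v, sigma S hS c h r b v = ∑ i ∈ Finset.range (v + 1), D i := fun v => rfl
  have hsig0 : sigma S hS c h r b 0 = 0 := by
    rw [hsig]; simp [hD0]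
  have hDeq : ∀ v : ℕ, D (v + 1) = f (r (v + 1) + sigma S hS c h r b v) :=
    fun v => delta_succ S hS c h r b v
  have key : ∀ v, 1 ≤ v → v ≤ V → 0 ≤ D v := by
    intro v
    induction v with
    | zero => omega
    | succ n ih =>
      intro _ hvV
      rcases Nat.eq_zero_or_pos n with rfl | hn
      · rw [hDeq, hrconst 1 le_rfl hvV, hsig0, add_zero]
        exact hpos
      · have ihn := ih hn (by omega)
        obtain ⟨m, rfl⟩ : ∃ m, n = m + 1 := ⟨n - 1, by omega⟩
        have hsplit : sigma S hS c h r b (m + 1)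
            = sigma S hS c h r b m + D (m + 1) := by
          rw [hsig, hsig, Finset.sum_range_succ]
        have he : D (m + 1) = f (r (m + 1) + sigma S hS c h r b m) := hDeq m
        have hr1 : r (m + 1) = rbar := hrconst (m + 1) (by omega) (by omega)
        have hr2 : r (m + 2) = rbar := hrconst (m + 2) (by omega) hvV
        have := hflip (r (m + 1) + sigma S hS c h r b m)
          (r (m + 2) + sigma S hS c h r b (m + 1))
          (by rw [hsplit, hr1, hr2]; linarith)
        rw [hr1, hr2, hsplit] at this
        rw [hr1] at he
        rw [hDeq (m + 1), hr2, hsplit]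
        linarith
  intro v v' hv1 hvv' hv'V
  unfold mu
  apply gmin_mono S hS c hS01
  have hrv : r v = rbar := hrconst v hv1 (by omega)
  have hrv' : r v' = rbar := hrconst v' (by omega) hv'V
  rw [hrv, hrv']
  have hsv : sigma S hS c h r b (v - 1) = ∑ i ∈ Finset.range v, D i := by
    rw [hsig]
    have : v - 1 + 1 = v := by omega
    rw [this]
  have hsv' : sigma S hS c h r b (v' - 1) = ∑ i ∈ Finset.range v', D i := by
    rw [hsig]
    have : v' - 1 + 1 = v' := by omega
    rw [this]
  rw [hsv, hsv']
  have : ∑ i ∈ Finset.range v, D i ≤ ∑ i ∈ Finset.range v', D i := by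
    apply Finset.sum_le_sum_of_subset_of_nonneg
    · exact Finset.range_subset_range.mpr hvv'
    · intro i hi hni
      rw [Finset.mem_range] at hi
      rw [Finset.mem_range] at hni
      exact key i (by omega) (by omega)
  linarith
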